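/- Let E, A ∈ ℂ^{n×n} with the pencil (E, A) regular (∃ s with det(sE − A) ≠ 0), B ∈ ℂ^{n×m}. If rank([B, A_E B, …, A_E^{n−1} B]) = n, where A_E = E(s₀E − A)^{-1} for some s₀ with s₀E − A invertible, then rank([sE − A, B]) = n for all s ∈ ℂ. -/

import Mathlib

open Matrix

/-- The Kalman controllability matrix `[B, A B, A² B, …, A^{n-1} B]`,
indexed so that block `k` (for `k : Fin n`) is `A ^ k * B`. -/
noncomputable def ctrbMatrix {n m : ℕ} (A : Matrix (Fin n) (Fin n) ℂ)
    (B : Matrix (Fin n) (Fin m) ℂ) : Matrix (Fin n) (Fin n × Fin m) ℂ :=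
  fun i p => (A ^ (p.1 : ℕ) * B) i p.2

lemma rank_eq_card_iff_leftNull {n : ℕ} {ι : Type*} [Fintype ι] [DecidableEq ι]
    (M : Matrix (Fin n) ι ℂ) :
    M.rank = n ↔ ∀ z : Fin n → ℂ, z ᵥ* M = 0 → z = 0 := by
  have ht : M.rank = Mᵀ.rank := (Matrix.rank_transpose M).symm
  have hrn := (Mᵀ.mulVecLin).finrank_range_add_finrank_ker
  have hdom : Module.finrank ℂ (Fin n → ℂ) = n := by simp
  rw [hdom] at hrn
  have hker : (∀ z : Fin n → ℂ, z ᵥ* M = 0 → z = 0) ↔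
      LinearMap.ker Mᵀ.mulVecLin = ⊥ := by
    rw [LinearMap.ker_eq_bot']
    constructor
    · intro h z hz
      exact h z (by rwa [← Matrix.mulVec_transpose, ← Matrix.mulVecLin_apply])
    · intro h z hz
      exact h z (by rwa [Matrix.mulVecLin_apply, Matrix.mulVec_transpose])
  rw [ht, Matrix.rank, hker]
  constructor
  · intro h
    have : Module.finrank ℂ (LinearMap.ker Mᵀ.mulVecLin) = 0 := by omega
    exact Submodule.finrank_eq_zero.mp this
  · intro h
    rw [h] at hrn
    simpa using hrn

lemma vecMul_smul_matrix {n k : ℕ} (c : ℂ) (M : Matrix (Fin n) (Fin k) ℂ)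
    (v : Fin n → ℂ) : v ᵥ* (c • M) = c • (v ᵥ* M) := by
  ext j
  simp only [Matrix.vecMul, dotProduct, Matrix.smul_apply, Pi.smul_apply,
    smul_eq_mul, Finset.mul_sum]
  exact Finset.sum_congr rfl fun i _ => by ring

theorem stmt_7 {n m : ℕ} (E A : Matrix (Fin n) (Fin n) ℂ) (B : Matrix (Fin n) (Fin m) ℂ)
    (s₀ : ℂ) (hreg : IsUnit (s₀ • E - A))
    (hK : (ctrbMatrix (E * (s₀ • E - A)⁻¹) B).rank = n) :
    ∀ s : ℂ, (Matrix.fromCols (s • E - A) B).rank = n := by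
  intro s
  rw [rank_eq_card_iff_leftNull]
  intro z hz
  rw [Matrix.vecMul_fromCols] at hz
  have h1 : z ᵥ* (s • E - A) = 0 := funext fun j => congrFun hz (Sum.inl j)
  have h2 : z ᵥ* B = 0 := funext fun j => congrFun hz (Sum.inr j)
  have hinv : (s₀ • E - A) * (s₀ • E - A)⁻¹ = 1 := Matrix.mul_nonsing_inv _
    ((Matrix.isUnit_iff_isUnit_det _).mp hreg)
  by_cases hs : s = s₀
  · subst hs
    have : z ᵥ* ((s • E - A) * (s • E - A)⁻¹) = 0 := by
      rw [← Matrix.vecMul_vecMul, h1, Matrix.zero_vecMul]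
    rwa [hinv, Matrix.vecMul_one] at this
  · set c : ℂ := s₀ - s with hc
    have hc0 : c ≠ 0 := sub_ne_zero.mpr (Ne.symm hs)
    have hA : z ᵥ* A = s • (z ᵥ* E) := by
      have := h1
      rw [Matrix.vecMul_sub, vecMul_smul_matrix, sub_eq_zero] at this
      exact this.symm
    have hE : z ᵥ* (s₀ • E - A) = c • (z ᵥ* E) := by
      rw [Matrix.vecMul_sub, vecMul_smul_matrix, hA, hc, sub_smul]
    have hAE : z ᵥ* (E * (s₀ • E - A)⁻¹) = c⁻¹ • z := by
      rw [← Matrix.vecMul_vecMul]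
      have hzE : z ᵥ* E = c⁻¹ • (z ᵥ* (s₀ • E - A)) := by
        rw [hE, smul_smul, inv_mul_cancel₀ hc0, one_smul]
      rw [hzE, Matrix.smul_vecMul, Matrix.vecMul_vecMul, hinv, Matrix.vecMul_one]
    have hpow : ∀ k : ℕ, z ᵥ* ((E * (s₀ • E - A)⁻¹) ^ k) = (c⁻¹) ^ k • z := by
      intro k
      induction k with
      | zero => simp
      | succ k ih =>
        rw [pow_succ, ← Matrix.vecMul_vecMul, ih, Matrix.smul_vecMul, hAE,
          smul_smul, pow_succ]
    have hctrb : z ᵥ* (ctrbMatrix (E * (s₀ • E - A)⁻¹) B) = 0 := by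
      ext p
      have key : z ᵥ* ((E * (s₀ • E - A)⁻¹) ^ (p.1 : ℕ) * B) = 0 := by
        rw [← Matrix.vecMul_vecMul, hpow, Matrix.smul_vecMul, h2, smul_zero]
      have : (z ᵥ* ctrbMatrix (E * (s₀ • E - A)⁻¹) B) p =
          (z ᵥ* ((E * (s₀ • E - A)⁻¹) ^ (p.1 : ℕ) * B)) p.2 := by
        simp [Matrix.vecMul, ctrbMatrix, dotProduct]
      rw [this, key]
      rfl
    exact (rank_eq_card_iff_leftNull _).mp hK z hctrb
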